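/- If Y is a Polish space that is not compact, then the pair (ω^ω, Y) satisfies UU. -/

import Mathlib

/-- The pair (X, Y) satisfies UU: there is an open set `U ⊆ X × Y` such that
every open `W ⊆ Y` is the cross section `{y | (x, y) ∈ U}` for exactly one `x`. -/
def UU (X Y : Type*) [TopologicalSpace X] [TopologicalSpace Y] : Prop :=
  ∃ U : Set (X × Y), IsOpen U ∧
    ∀ W : Set Y, IsOpen W → ∃! x : X, {y | (x, y) ∈ U} = W

open Metric Set

noncomputable section

namespace UUP

variable {Y : Type*} [MetricSpace Y]

/-- Packaged data: dense sequence `q`, and an `ε`-separated sequence `z`. -/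
structure Ctx (Y : Type*) [MetricSpace Y] : Type _ where
  q : ℕ → Y
  hq : DenseRange q
  ε : ℝ
  hε : 0 < ε
  z : ℕ → Y
  hz : ∀ k l : ℕ, k ≠ l → ε ≤ dist (z k) (z l)

variable (C : Ctx Y)

/-- radius schedule -/
def rad (i : ℕ) : ℝ := C.ε / 16 * (1 / 2) ^ i

lemma rad_pos (i : ℕ) : 0 < rad C i := by
  unfold rad
  have h := C.hε
  positivity

lemma rad_le (i : ℕ) : rad C i ≤ C.ε / 16 := by
  have h1 : ((1 : ℝ) / 2) ^ i ≤ 1 := by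
    apply pow_le_one₀ <;> norm_num
  have h2 : (0:ℝ) < C.ε / 16 := by have := C.hε; positivity
  calc rad C i = C.ε / 16 * (1/2)^i := rfl
    _ ≤ C.ε/16 * 1 := by nlinarith
    _ = C.ε/16 := by ring

lemma rad_antitone : Antitone (rad C) := by
  intro i j hij
  unfold rad
  have h2 : (0:ℝ) < C.ε / 16 := by have := C.hε; positivity
  have : ((1:ℝ)/2) ^ j ≤ (1/2)^i := by
    apply pow_le_pow_of_le_one <;> norm_num
    exact hij
  nlinarith

lemma exists_rad_le {δ : ℝ} (hδ : 0 < δ) : ∃ i, rad C i ≤ δ := by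
  obtain ⟨n, hn⟩ := exists_pow_lt_of_lt_one (x := δ / (C.ε/16)) (y := (1:ℝ)/2)
    (by have := C.hε; positivity) (by norm_num)
  refine ⟨n, ?_⟩
  have h2 : (0:ℝ) < C.ε / 16 := by have := C.hε; positivity
  unfold rad
  rw [mul_comm]
  calc (1/2:ℝ)^n * (C.ε/16) ≤ (δ / (C.ε/16)) * (C.ε/16) := by nlinarith
    _ = δ := div_mul_cancel₀ δ (ne_of_gt h2)

/-- the coded basic ball -/
def bb (m : ℕ) : Set Y := ball (C.q m.unpair.1) (rad C m.unpair.2)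

/-- the z-ball -/
def Zb (k : ℕ) : Set Y := ball (C.z k) (C.ε / 4)

lemma Zb_nonempty (k : ℕ) : (Zb C k).Nonempty :=
  ⟨C.z k, mem_ball_self (by have := C.hε; positivity)⟩

lemma Zb_disjoint {k l : ℕ} (h : k ≠ l) : Disjoint (Zb C k) (Zb C l) := by
  rw [Set.disjoint_left]
  intro y hy hy'
  have := C.hz k l h
  simp only [Zb, mem_ball] at hy hy'
  rw [dist_comm] at hy
  have h3 := dist_triangle (C.z k) y (C.z l)
  have := C.hε
  linarith

/-- a small ball (radius ≤ ε/16) meets at most one z-ball -/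
lemma small_meets_at_most_one {c : Y} {r : ℝ} (hr : r ≤ C.ε / 16) {k l : ℕ}
    (hk : ¬ Disjoint (ball c r) (Zb C k)) (hl : ¬ Disjoint (ball c r) (Zb C l)) : k = l := by
  by_contra hne
  obtain ⟨y₁, hy₁, hy₁'⟩ := Set.not_disjoint_iff.1 hk
  obtain ⟨y₂, hy₂, hy₂'⟩ := Set.not_disjoint_iff.1 hl
  simp only [Zb, mem_ball] at hy₁ hy₁' hy₂ hy₂'
  have h := C.hz k l hne
  have d1 : dist (C.z k) (C.z l) ≤ dist (C.z k) y₁ + dist y₁ c + dist c y₂ + dist y₂ (C.z l) := by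
    have t1 := dist_triangle (C.z k) y₁ (C.z l)
    have t2 := dist_triangle y₁ c (C.z l)
    have t3 := dist_triangle c y₂ (C.z l)
    linarith
  have e1 : dist (C.z k) y₁ < C.ε/4 := by rw [dist_comm]; exact hy₁'
  have e2 : dist y₁ c < r := hy₁
  have e3 : dist c y₂ < r := by rw [dist_comm] at hy₂; exact hy₂
  have e4 : dist y₂ (C.z l) < C.ε/4 := hy₂'
  have := C.hε
  linarith

/-- refinement relation between coded balls: `bb m'` sits strictly inside `bb m`
with a 2-radius margin, and has small radius. -/
def refinesC (m' m : ℕ) (lev : ℕ) : Prop :=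
  dist (C.q m'.unpair.1) (C.q m.unpair.1) + 2 * rad C m'.unpair.2 < rad C m.unpair.2 ∧
    rad C m'.unpair.2 ≤ rad C lev

/-- refinement into a z-ball -/
def refinesZ (m' k : ℕ) (lev : ℕ) : Prop :=
  dist (C.q m'.unpair.1) (C.z k) + 2 * rad C m'.unpair.2 < C.ε / 4 ∧
    rad C m'.unpair.2 ≤ rad C lev

lemma refinesC_subset {m' m lev : ℕ} (h : refinesC C m' m lev) : bb C m' ⊆ bb C m := by
  intro y hy
  simp only [bb, mem_ball] at hy ⊢
  have := dist_triangle y (C.q m'.unpair.1) (C.q m.unpair.1)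
  have hp := rad_pos C m'.unpair.2
  obtain ⟨h1, _⟩ := h
  linarith

lemma refinesZ_subset {m' k lev : ℕ} (h : refinesZ C m' k lev) : bb C m' ⊆ Zb C k := by
  intro y hy
  simp only [bb, Zb, mem_ball] at hy ⊢
  have := dist_triangle y (C.q m'.unpair.1) (C.z k)
  have hp := rad_pos C m'.unpair.2
  obtain ⟨h1, _⟩ := h
  linarith

/-- key followability lemma: given a point of `ball c₀ R \ W`, there is a coded ball
around it refining into `ball c₀ R`. -/
lemma follow (c₀ : Y) (R : ℝ) {W : Set Y} {y : Y} (hy : y ∈ ball c₀ R) (hyW : y ∉ W)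
    (lev : ℕ) :
    ∃ m : ℕ, (dist (C.q m.unpair.1) c₀ + 2 * rad C m.unpair.2 < R ∧
      rad C m.unpair.2 ≤ rad C lev) ∧ y ∈ bb C m ∧ y ∉ W := by
  simp only [mem_ball] at hy
  have hR : 0 < R - dist y c₀ := by linarith [dist_nonneg (x := y) (y := c₀)]
  obtain ⟨i, hi⟩ := exists_rad_le C (δ := min (rad C lev) ((R - dist y c₀)/5))
    (lt_min (rad_pos C lev) (by linarith))
  obtain ⟨j, hj⟩ := C.hq.exists_dist_lt y (half_pos (rad_pos C i))
  refine ⟨Nat.pair j i, ?_, ?_, hyW⟩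
  · constructor
    · simp only [Nat.unpair_pair]
      have h1 : dist (C.q j) c₀ ≤ dist (C.q j) y + dist y c₀ := dist_triangle _ _ _
      have h2 : dist (C.q j) y < rad C i / 2 := by rw [dist_comm]; exact hj
      have h3 : rad C i ≤ (R - dist y c₀)/5 := le_trans hi (min_le_right _ _)
      have h5 := rad_pos C i
      linarith
    · simp only [Nat.unpair_pair]
      exact le_trans hi (min_le_left _ _)
  · simp only [bb, Nat.unpair_pair, mem_ball]
    have := rad_pos C i
    linarith [hj]

/-- base property: every point of an open set is in some coded ball inside it. -/
lemma exists_bb_subset {W : Set Y} (hW : IsOpen W) {y : Y} (hy : y ∈ W) :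
    ∃ m, y ∈ bb C m ∧ bb C m ⊆ W := by
  obtain ⟨R, hR, hball⟩ := Metric.isOpen_iff.1 hW y hy
  obtain ⟨m, hm, hym, -⟩ := follow C y R (W := ∅) (mem_ball_self hR) (by simp) 0
  refine ⟨m, hym, fun p hp => hball ?_⟩
  simp only [bb, mem_ball] at hp ⊢
  have h1 := dist_triangle p (C.q m.unpair.1) y
  have h2 : dist (C.q m.unpair.1) y + 2 * rad C m.unpair.2 < R := hm.1
  have h3 := rad_pos C m.unpair.2
  linarith


/-! ### Cells -/

structure Cell (Y : Type*) [MetricSpace Y] : Type _ where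
  level : ℕ
  small : Set ℕ
  zpos : Set ℕ
  chains : List ℕ

/-- accumulated positive (open) part of a cell -/
def cpos (A : Cell Y) : Set Y := (⋃ m ∈ A.small, bb C m) ∪ (⋃ k ∈ A.zpos, Zb C k)

lemma cpos_open (A : Cell Y) : IsOpen (cpos C A) := by
  apply IsOpen.union <;> apply isOpen_biUnion <;> intro i _ <;> exact isOpen_ball

/-- the set of open sets compatible with a cell's clauses -/
def cmem (A : Cell Y) : Set (Set Y) :=
  {W | IsOpen W ∧ cpos C A ⊆ W ∧ ∀ c ∈ A.chains, (bb C c \ W).Nonempty}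

/-- invariants maintained along the tree -/
structure Good (A : Cell Y) : Prop where
  finite_small : A.small.Finite
  zpos_lt : ∀ k ∈ A.zpos, (Nat.unpair k).1 < A.level
  chains_rad : ∀ c ∈ A.chains, rad C c.unpair.2 ≤ rad C A.level

/-- indices usable for fresh z-designation at a cell -/
def desigSet (A : Cell Y) : Set ℕ :=
  {t | (∀ m ∈ A.small, Disjoint (bb C m) (Zb C (Nat.pair A.level t))) ∧
       (∀ c ∈ A.chains, Disjoint (bb C c) (Zb C (Nat.pair A.level t)))}

lemma desigSet_infinite {A : Cell Y} (hA : Good C A) : (desigSet C A).Infinite := by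
  have hsub : (desigSet C A)ᶜ ⊆
      (⋃ m ∈ A.small, {t | ¬ Disjoint (bb C m) (Zb C (Nat.pair A.level t))}) ∪
      (⋃ c ∈ A.chains.toFinset, {t | ¬ Disjoint (bb C c) (Zb C (Nat.pair A.level t))}) := by
    intro t ht
    simp only [desigSet, mem_compl_iff, mem_setOf_eq, not_and_or, not_forall] at ht
    rcases ht with ⟨m, hm, hd⟩ | ⟨c, hc, hd⟩
    · exact Or.inl (mem_biUnion hm hd)
    · exact Or.inr (mem_biUnion (List.mem_toFinset.2 hc) hd)
  have hfin : ((desigSet C A)ᶜ).Finite := by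
    refine Set.Finite.subset ?_ hsub
    apply Set.Finite.union
    · apply Set.Finite.biUnion hA.finite_small
      intro m _
      apply Set.Subsingleton.finite
      intro t₁ h₁ t₂ h₂
      have := small_meets_at_most_one C (c := C.q m.unpair.1) (r := rad C m.unpair.2)
        (rad_le C _) h₁ h₂
      have : (Nat.pair A.level t₁).unpair = (Nat.pair A.level t₂).unpair := by rw [this]
      simpa [Nat.unpair_pair] using congrArg Prod.snd this
    · apply Set.Finite.biUnion (A.chains.toFinset).finite_toSet
      intro c _
      apply Set.Subsingleton.finite
      intro t₁ h₁ t₂ h₂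
      have := small_meets_at_most_one C (c := C.q c.unpair.1) (r := rad C c.unpair.2)
        (rad_le C _) h₁ h₂
      have : (Nat.pair A.level t₁).unpair = (Nat.pair A.level t₂).unpair := by rw [this]
      simpa [Nat.unpair_pair] using congrArg Prod.snd this
  have := hfin.infinite_compl
  simpa using this

/-- the t-th designated fresh z-index at a cell -/
def desig (A : Cell Y) (t : ℕ) : ℕ :=
  Nat.pair A.level (Nat.nth (· ∈ desigSet C A) t)

lemma desig_mem {A : Cell Y} (hA : Good C A) (t : ℕ) :
    Nat.nth (· ∈ desigSet C A) t ∈ desigSet C A :=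
  Nat.nth_mem_of_infinite (by simpa [setOf] using desigSet_infinite C hA) t

lemma desig_spec {A : Cell Y} (hA : Good C A) (t : ℕ) :
    (∀ m ∈ A.small, Disjoint (bb C m) (Zb C (desig C A t))) ∧
    (∀ c ∈ A.chains, Disjoint (bb C c) (Zb C (desig C A t))) :=
  desig_mem C hA t

lemma desig_unpair (A : Cell Y) (t : ℕ) :
    (desig C A t).unpair = (A.level, Nat.nth (· ∈ desigSet C A) t) := by
  simp [desig, Nat.unpair_pair]

lemma desig_injective {A : Cell Y} (hA : Good C A) : Function.Injective (desig C A) := by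
  intro t₁ t₂ h
  have h2 := congrArg Nat.unpair h
  rw [desig_unpair, desig_unpair] at h2
  have := congrArg Prod.snd h2
  exact Nat.nth_injective (by simpa [setOf] using desigSet_infinite C hA) this

/-- index describing one child step -/
abbrev ChildIdx : Type := Bool × ℕ × Option (ℕ × ℕ) × List ℕ

/-- assembling a child cell from its parent and a child index -/
def child (A : Cell Y) (ι : ChildIdx) : Cell Y where
  level := A.level + 1
  small := A.small ∪
    (if ι.1 then {A.level} else {m' | m' < ι.2.1 ∧ refinesC C m' A.level (A.level+1)}) ∪
    (match ι.2.2.1 with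
      | none => ∅
      | some (t₀, mz) => {m' | m' < mz ∧ refinesZ C m' (desig C A t₀) (A.level+1)}) ∪
    {m' | ∃ pr ∈ A.chains.zip ι.2.2.2, m' < pr.2 ∧ refinesC C m' pr.1 (A.level+1)}
  zpos := A.zpos ∪
    (match ι.2.2.1 with
      | none => Set.range (desig C A)
      | some (t₀, _) => desig C A '' Iio t₀)
  chains := (A.chains.zip ι.2.2.2).map Prod.snd ++
    (if ι.1 then [] else [ι.2.1]) ++
    (match ι.2.2.1 with
      | none => []
      | some (_, mz) => [mz])


/-! ### canonical choices -/

open scoped Classical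

lemma initChoice_ex {n : ℕ} {W : Set Y} (h : ¬ bb C n ⊆ W) (lev : ℕ) :
    ∃ m, refinesC C m n lev ∧ (bb C m \ W).Nonempty := by
  obtain ⟨y, hy, hyW⟩ := Set.not_subset.1 h
  obtain ⟨m, hm, hym, hym'⟩ := follow C (C.q n.unpair.1) (rad C n.unpair.2) hy hyW lev
  exact ⟨m, hm, ⟨y, hym, hym'⟩⟩

lemma zChoice_ex {k : ℕ} {W : Set Y} (h : ¬ Zb C k ⊆ W) (lev : ℕ) :
    ∃ m, refinesZ C m k lev ∧ (bb C m \ W).Nonempty := by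
  obtain ⟨y, hy, hyW⟩ := Set.not_subset.1 h
  obtain ⟨m, hm, hym, hym'⟩ := follow C (C.z k) (C.ε / 4) hy hyW lev
  exact ⟨m, hm, ⟨y, hym, hym'⟩⟩

lemma refChoice_ex {c : ℕ} {W : Set Y} (h : (bb C c \ W).Nonempty) (lev : ℕ) :
    ∃ m, refinesC C m c lev ∧ (bb C m \ W).Nonempty := by
  obtain ⟨y, hy, hyW⟩ := h
  obtain ⟨m, hm, hym, hym'⟩ := follow C (C.q c.unpair.1) (rad C c.unpair.2) hy hyW lev
  exact ⟨m, hm, ⟨y, hym, hym'⟩⟩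

/-- canonical refinement choice for a single chain -/
def refFn (lev : ℕ) (W : Set Y) (c : ℕ) : ℕ :=
  if h : (bb C c \ W).Nonempty then Nat.find (refChoice_ex C h lev) else 0

/-- canonical child index of `W` at cell `A` -/
def idx (A : Cell Y) (W : Set Y) : ChildIdx :=
  ( if bb C A.level ⊆ W then true else false,
    if h : ¬ bb C A.level ⊆ W then Nat.find (initChoice_ex C h (A.level+1)) else 0,
    if h : ∃ t, ¬ Zb C (desig C A t) ⊆ W then
      some (Nat.find h, Nat.find (zChoice_ex C (Nat.find_spec h) (A.level+1)))
    else none,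
    A.chains.map (refFn C (A.level+1) W) )

lemma child_chains_idx (A : Cell Y) (W : Set Y) :
    (child C A (idx C A W)).chains =
      A.chains.map (refFn C (A.level+1) W) ++
      (if bb C A.level ⊆ W then [] else
        [if h : ¬ bb C A.level ⊆ W then Nat.find (initChoice_ex C h (A.level+1)) else 0]) ++
      (if h : ∃ t, ¬ Zb C (desig C A t) ⊆ W then
        [Nat.find (zChoice_ex C (Nat.find_spec h) (A.level+1))] else []) := by
  simp only [child, idx]
  congr 1
  · congr 1
    · rw [show A.chains.zip (A.chains.map (refFn C (A.level+1) W)) =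
        A.chains.map (fun c => (c, refFn C (A.level+1) W c)) from by
          simpa using List.zip_map' (f := id) (g := refFn C (A.level+1) W) (l := A.chains)]
      rw [List.map_map]
      rfl
    · by_cases h : bb C A.level ⊆ W <;> simp [h]
  · by_cases h : ∃ t, ¬ Zb C (desig C A t) ⊆ W <;> simp [h]

lemma small_mono_child (A : Cell Y) (ι : ChildIdx) : A.small ⊆ (child C A ι).small := by
  intro m hm
  simp only [child, Set.mem_union]
  tauto

lemma zpos_mono_child (A : Cell Y) (ι : ChildIdx) : A.zpos ⊆ (child C A ι).zpos := by
  intro k hk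
  simp only [child, Set.mem_union]
  tauto

lemma cpos_mono_child (A : Cell Y) (ι : ChildIdx) : cpos C A ⊆ cpos C (child C A ι) :=
  Set.union_subset_union
    (Set.biUnion_subset_biUnion_left (small_mono_child C A ι))
    (Set.biUnion_subset_biUnion_left (zpos_mono_child C A ι))

lemma mem_child_idx {A : Cell Y} {W : Set Y} (hA : Good C A) (hW : W ∈ cmem C A) :
    W ∈ cmem C (child C A (idx C A W)) := by
  obtain ⟨hWo, hWp, hWc⟩ := hW
  refine ⟨hWo, ?_, ?_⟩
  · -- positive part
    apply Set.union_subset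
    · apply Set.iUnion₂_subset
      intro m hm
      simp only [child, idx, Set.mem_union] at hm
      rcases hm with ((hm | hm) | hm) | hm
      · exact le_trans (by exact Set.subset_biUnion_of_mem hm)
          (le_trans le_sup_left hWp)
      · -- bit part
        by_cases hb : bb C A.level ⊆ W
        · simp only [if_pos hb, mem_singleton_iff] at hm
          subst hm; exact hb
        · simp only [if_neg hb, mem_setOf_eq] at hm
          obtain ⟨hlt, href⟩ := hm
          have := Nat.find_min (initChoice_ex C hb (A.level+1)) (by
            simpa only [dif_pos hb] using hlt)
          rw [not_and] at this
          have h2 := this href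
          rw [Set.not_nonempty_iff_eq_empty, Set.diff_eq_empty] at h2
          exact h2
      · -- z skipped part
        by_cases hz : ∃ t, ¬ Zb C (desig C A t) ⊆ W
        · rw [dif_pos hz] at hm
          simp only [mem_setOf_eq] at hm
          obtain ⟨hlt, href⟩ := hm
          have := Nat.find_min (zChoice_ex C (Nat.find_spec hz) (A.level+1)) hlt
          rw [not_and] at this
          have h2 := this href
          rw [Set.not_nonempty_iff_eq_empty, Set.diff_eq_empty] at h2
          exact h2
        · rw [dif_neg hz] at hm
          simp at hm
      · -- chain skipped part
        simp only [mem_setOf_eq] at hm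
        obtain ⟨pr, hpr, hlt, href⟩ := hm
        rw [show A.chains.zip (A.chains.map (refFn C (A.level+1) W)) =
            A.chains.map (fun c => (c, refFn C (A.level+1) W c)) from by
              simpa using List.zip_map' (f := id) (g := refFn C (A.level+1) W) (l := A.chains),
          List.mem_map] at hpr
        obtain ⟨c, hc, rfl⟩ := hpr
        have hne : (bb C c \ W).Nonempty := hWc c hc
        simp only [refFn, dif_pos hne] at hlt
        have := Nat.find_min (refChoice_ex C hne (A.level+1)) hlt
        rw [not_and] at this
        have h2 := this href
        rw [Set.not_nonempty_iff_eq_empty, Set.diff_eq_empty] at h2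
        exact h2
    · apply Set.iUnion₂_subset
      intro k hk
      simp only [child, idx, Set.mem_union] at hk
      rcases hk with hk | hk
      · exact le_trans (by exact Set.subset_biUnion_of_mem hk)
          (le_trans le_sup_right hWp)
      · by_cases hz : ∃ t, ¬ Zb C (desig C A t) ⊆ W
        · rw [dif_pos hz] at hk
          simp only [mem_image, mem_Iio] at hk
          obtain ⟨t', hlt, rfl⟩ := hk
          have := Nat.find_min hz hlt
          rw [not_not] at this
          exact this
        · rw [dif_neg hz] at hk
          obtain ⟨t, rfl⟩ := hk
          rw [not_exists] at hz
          have := hz t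
          rw [not_not] at this
          exact this
  · -- chain clauses
    intro c hc
    rw [child_chains_idx] at hc
    simp only [List.mem_append, List.mem_map] at hc
    rcases hc with (⟨c₀, hc₀, rfl⟩ | hc) | hc
    · have hne : (bb C c₀ \ W).Nonempty := hWc c₀ hc₀
      simp only [refFn, dif_pos hne]
      exact (Nat.find_spec (refChoice_ex C hne (A.level+1))).2
    · by_cases hb : bb C A.level ⊆ W
      · rw [if_pos hb] at hc; simp at hc
      · rw [if_neg hb] at hc
        simp only [List.mem_singleton] at hc
        subst hc
        rw [dif_pos hb]
        exact (Nat.find_spec (initChoice_ex C hb (A.level+1))).2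
    · by_cases hz : ∃ t, ¬ Zb C (desig C A t) ⊆ W
      · rw [dif_pos hz] at hc
        simp only [List.mem_singleton] at hc
        subst hc
        exact (Nat.find_spec (zChoice_ex C (Nat.find_spec hz) (A.level+1))).2
      · rw [dif_neg hz] at hc; simp at hc


lemma good_child {A : Cell Y} {W : Set Y} (hA : Good C A) (hW : W ∈ cmem C A) :
    Good C (child C A (idx C A W)) := by
  obtain ⟨hWo, hWp, hWc⟩ := hW
  constructor
  · -- finite small
    apply Set.Finite.union
    apply Set.Finite.union
    apply Set.Finite.union
    · exact hA.finite_small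
    · by_cases hb : bb C A.level ⊆ W
      · simp only [idx, if_pos hb]
        exact Set.finite_singleton _
      · simp only [idx, if_neg hb]
        exact Set.Finite.subset (Set.finite_Iio _) (fun m' hm' => hm'.1)
    · by_cases hz : ∃ t, ¬ Zb C (desig C A t) ⊆ W
      · simp only [idx, dif_pos hz]
        exact Set.Finite.subset (Set.finite_Iio _) (fun m' hm' => hm'.1)
      · simp only [idx, dif_neg hz]
        exact Set.finite_empty
    · refine Set.Finite.subset
        (Set.Finite.biUnion (((A.chains.zip (idx C A W).2.2.2).toFinset : Finset (ℕ × ℕ))).finite_toSet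
          (fun pr _ => Set.finite_Iio pr.2)) (fun m' hm' => ?_)
      obtain ⟨pr, hpr, hlt, _⟩ := hm'
      exact Set.mem_biUnion (List.mem_toFinset.2 hpr) hlt
  · -- zpos levels
    intro k hk
    simp only [child, Set.mem_union] at hk
    rcases hk with hk | hk
    · exact lt_trans (hA.zpos_lt k hk) (Nat.lt_succ_self _)
    · have : (child C A (idx C A W)).level = A.level + 1 := rfl
      rw [this]
      by_cases hz : ∃ t, ¬ Zb C (desig C A t) ⊆ W
      · simp only [idx, dif_pos hz] at hk
        obtain ⟨t', _, rfl⟩ := hk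
        rw [desig_unpair]
        exact Nat.lt_succ_self _
      · simp only [idx, dif_neg hz] at hk
        obtain ⟨t, rfl⟩ := hk
        rw [desig_unpair]
        exact Nat.lt_succ_self _
  · -- chain radii
    intro c hc
    have hlev : (child C A (idx C A W)).level = A.level + 1 := rfl
    rw [hlev]
    rw [child_chains_idx] at hc
    simp only [List.mem_append, List.mem_map] at hc
    rcases hc with (⟨c₀, hc₀, rfl⟩ | hc) | hc
    · have hne : (bb C c₀ \ W).Nonempty := hWc c₀ hc₀
      simp only [refFn, dif_pos hne]
      exact (Nat.find_spec (refChoice_ex C hne (A.level+1))).1.2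
    · by_cases hb : bb C A.level ⊆ W
      · rw [if_pos hb] at hc; simp at hc
      · rw [if_neg hb] at hc
        simp only [List.mem_singleton] at hc
        subst hc
        rw [dif_pos hb]
        exact (Nat.find_spec (initChoice_ex C hb (A.level+1))).1.2
    · by_cases hz : ∃ t, ¬ Zb C (desig C A t) ⊆ W
      · rw [dif_pos hz] at hc
        simp only [List.mem_singleton] at hc
        subst hc
        exact (Nat.find_spec (zChoice_ex C (Nat.find_spec hz) (A.level+1))).1.2
      · rw [dif_neg hz] at hc; simp at hc

/-- the set of (nonempty) children of a cell -/
def kids (A : Cell Y) : Set (Cell Y) := {B | ∃ W ∈ cmem C A, B = child C A (idx C A W)}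

lemma kids_countable (A : Cell Y) : (kids C A).Countable := by
  have : kids C A ⊆ Set.range (child C A) := by
    rintro B ⟨W, _, rfl⟩
    exact Set.mem_range_self _
  exact Set.Countable.mono this (Set.countable_range _)


/-! ### infinitely many children -/

/-- the padding opens -/
def Wpad (A : Cell Y) (t : ℕ) : Set Y := cpos C A ∪ ⋃ t' ∈ Iio t, Zb C (desig C A t')

lemma Wpad_mem {A : Cell Y} (hA : Good C A) (hne : (cmem C A).Nonempty) (t : ℕ) :
    Wpad C A t ∈ cmem C A := by
  obtain ⟨W₁, hW₁o, hW₁p, hW₁c⟩ := hne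
  refine ⟨?_, Set.subset_union_left, ?_⟩
  · exact IsOpen.union (cpos_open C A) (isOpen_biUnion (fun _ _ => isOpen_ball))
  · intro c hc
    obtain ⟨y, hy, hyW⟩ := hW₁c c hc
    refine ⟨y, hy, ?_⟩
    intro hmem
    rcases hmem with hmem | hmem
    · exact hyW (hW₁p hmem)
    · simp only [mem_iUnion, mem_Iio, exists_prop] at hmem
      obtain ⟨t', _, hmem⟩ := hmem
      exact Set.disjoint_left.1 ((desig_spec C hA t').2 c hc) hy hmem

lemma Zb_desig_disjoint_Wpad {A : Cell Y} (hA : Good C A) (t t'' : ℕ) (htt : t ≤ t'') :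
    Disjoint (Zb C (desig C A t'')) (Wpad C A t) := by
  rw [Set.disjoint_right]
  intro y hy hy'
  rcases hy with hy | hy
  · rcases hy with hy | hy
    · simp only [mem_iUnion, exists_prop] at hy
      obtain ⟨m, hm, hy⟩ := hy
      exact Set.disjoint_left.1 ((desig_spec C hA t'').1 m hm) hy hy'
    · simp only [mem_iUnion, exists_prop] at hy
      obtain ⟨k, hk, hy⟩ := hy
      have hkne : k ≠ desig C A t'' := by
        intro h
        have := hA.zpos_lt k hk
        rw [h, desig_unpair] at this
        exact lt_irrefl _ this
      exact Set.disjoint_left.1 (Zb_disjoint C hkne) hy hy'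
  · simp only [mem_iUnion, mem_Iio, exists_prop] at hy
    obtain ⟨t', ht', hy⟩ := hy
    have : desig C A t' ≠ desig C A t'' := fun h =>
      absurd (desig_injective C hA h) (by omega)
    exact Set.disjoint_left.1 (Zb_disjoint C this) hy hy'

lemma tau_ex_Wpad {A : Cell Y} (hA : Good C A) (t : ℕ) :
    ∃ t', ¬ Zb C (desig C A t') ⊆ Wpad C A t := by
  refine ⟨t, fun hsub => ?_⟩
  obtain ⟨y, hy⟩ := Zb_nonempty C (desig C A t)
  exact Set.disjoint_left.1 (Zb_desig_disjoint_Wpad C hA t t le_rfl) hy (hsub hy)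

lemma tau_find_Wpad {A : Cell Y} (hA : Good C A) (t : ℕ) :
    Nat.find (tau_ex_Wpad C hA t) = t := by
  have h1 : ¬ Zb C (desig C A t) ⊆ Wpad C A t := fun hsub => by
    obtain ⟨y, hy⟩ := Zb_nonempty C (desig C A t)
    exact Set.disjoint_left.1 (Zb_desig_disjoint_Wpad C hA t t le_rfl) hy (hsub hy)
  refine le_antisymm (Nat.find_le h1) ?_
  by_contra hlt
  push_neg at hlt
  apply Nat.find_spec (tau_ex_Wpad C hA t)
  intro y hy
  right
  simp only [mem_iUnion, mem_Iio, exists_prop]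
  exact ⟨Nat.find (tau_ex_Wpad C hA t), hlt, hy⟩

lemma desig_not_mem_zpos {A : Cell Y} (hA : Good C A) (t : ℕ) : desig C A t ∉ A.zpos := by
  intro h
  have := hA.zpos_lt _ h
  rw [desig_unpair] at this
  exact lt_irrefl _ this

lemma kids_infinite {A : Cell Y} (hA : Good C A) (hne : (cmem C A).Nonempty) :
    (kids C A).Infinite := by
  apply Set.infinite_of_injective_forall_mem
    (f := fun t => child C A (idx C A (Wpad C A t)))
    (s := kids C A)
  case hi =>
    intro t₁ t₂ hc
    have hz := congrArg Cell.zpos hc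
    simp only [child, idx, dif_pos (tau_ex_Wpad C hA t₁), dif_pos (tau_ex_Wpad C hA t₂)] at hz
    rw [tau_find_Wpad C hA t₁, tau_find_Wpad C hA t₂] at hz
    have key : ∀ t t' : ℕ, A.zpos ∪ desig C A '' Iio t ⊆ A.zpos ∪ desig C A '' Iio t' →
        t ≤ t' := by
      intro t t' hsub
      by_contra hlt
      push_neg at hlt
      have hmem : desig C A t' ∈ A.zpos ∪ desig C A '' Iio t :=
        Or.inr ⟨t', hlt, rfl⟩
      rcases hsub hmem with h | h
      · exact desig_not_mem_zpos C hA t' h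
      · obtain ⟨t'', ht'', heq⟩ := h
        have h2 := desig_injective C hA heq
        rw [mem_Iio] at ht''
        omega
    exact le_antisymm (key t₁ t₂ (le_of_eq hz)) (key t₂ t₁ (ge_of_eq hz))
  case hf =>
    intro t
    exact ⟨Wpad C A t, Wpad_mem C hA hne t, rfl⟩

/-- enumeration of the children of a good cell -/
def kidsEquiv {A : Cell Y} (h : Good C A ∧ (cmem C A).Nonempty) : ℕ ≃ ↥(kids C A) :=
  letI : Denumerable ↥(kids C A) := Classical.choice (nonempty_denumerable_iff.2
    ⟨(kids_countable C A).to_subtype, Set.infinite_coe_iff.2 (kids_infinite C h.1 h.2)⟩)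
  (Denumerable.eqv ↥(kids C A)).symm

def succCell (A : Cell Y) (n : ℕ) : Cell Y :=
  if h : Good C A ∧ (cmem C A).Nonempty then (kidsEquiv C h n : Cell Y) else A

lemma succCell_mem_kids {A : Cell Y} (h : Good C A ∧ (cmem C A).Nonempty) (n : ℕ) :
    succCell C A n ∈ kids C A := by
  rw [succCell, dif_pos h]
  exact (kidsEquiv C h n).2

lemma succCell_injective {A : Cell Y} (h : Good C A ∧ (cmem C A).Nonempty) {n n' : ℕ}
    (heq : succCell C A n = succCell C A n') : n = n' := by
  simp only [succCell, dif_pos h] at heq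
  exact (kidsEquiv C h).injective (Subtype.ext heq)

lemma succCell_surjective {A : Cell Y} (h : Good C A ∧ (cmem C A).Nonempty) {B : Cell Y}
    (hB : B ∈ kids C A) : ∃ n, succCell C A n = B := by
  obtain ⟨n, hn⟩ := (kidsEquiv C h).surjective ⟨B, hB⟩
  exact ⟨n, by rw [succCell, dif_pos h, hn]⟩


/-! ### the tree of cells -/

def root : Cell Y := ⟨0, ∅, ∅, []⟩

lemma cpos_root : cpos C (root : Cell Y) = ∅ := by
  simp [cpos, root]

lemma good_root : Good C (root : Cell Y) := by
  refine ⟨?_, ?_, ?_⟩ <;> simp [root]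

lemma cmem_root_nonempty : (cmem C (root : Cell Y)).Nonempty :=
  ⟨∅, isOpen_empty, by rw [cpos_root], by simp [root]⟩

/-- the cell visited at time `n` along branch `x` -/
def cellAt (x : ℕ → ℕ) : ℕ → Cell Y
  | 0 => root
  | n+1 => succCell C (cellAt x n) (x n)

lemma cellAt_spec (x : ℕ → ℕ) :
    ∀ n : ℕ, (Good C (cellAt C x n) ∧ (cmem C (cellAt C x n)).Nonempty)
      ∧ (cellAt C x n).level = n := by
  intro n
  induction n with
  | zero => exact ⟨⟨good_root C, cmem_root_nonempty C⟩, rfl⟩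
  | succ n ih =>
    obtain ⟨⟨hg, hne⟩, hlev⟩ := ih
    have hk : succCell C (cellAt C x n) (x n) ∈ kids C (cellAt C x n) :=
      succCell_mem_kids C ⟨hg, hne⟩ (x n)
    obtain ⟨W, hW, heq⟩ := hk
    have h1 : cellAt C x (n+1) = child C (cellAt C x n) (idx C (cellAt C x n) W) := heq
    refine ⟨⟨?_, ?_⟩, ?_⟩
    · rw [h1]; exact good_child C hg hW
    · rw [h1]; exact ⟨W, mem_child_idx C hg hW⟩
    · rw [h1]
      show (cellAt C x n).level + 1 = n + 1
      rw [hlev]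

lemma cellAt_good (x : ℕ → ℕ) (n : ℕ) : Good C (cellAt C x n) :=
  ((cellAt_spec C x n).1).1

lemma cellAt_nonempty (x : ℕ → ℕ) (n : ℕ) : (cmem C (cellAt C x n)).Nonempty :=
  ((cellAt_spec C x n).1).2

lemma cellAt_level (x : ℕ → ℕ) (n : ℕ) : (cellAt C x n).level = n :=
  (cellAt_spec C x n).2

lemma cellAt_kids (x : ℕ → ℕ) (n : ℕ) :
    cellAt C x (n+1) ∈ kids C (cellAt C x n) :=
  succCell_mem_kids C ⟨cellAt_good C x n, cellAt_nonempty C x n⟩ (x n)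

/-- the chosen member open set witnessing the step at time n -/
def wtn (x : ℕ → ℕ) (n : ℕ) : Set Y := (cellAt_kids C x n).choose

lemma wtn_mem (x : ℕ → ℕ) (n : ℕ) : wtn C x n ∈ cmem C (cellAt C x n) :=
  (cellAt_kids C x n).choose_spec.1

lemma cellAt_succ_eq (x : ℕ → ℕ) (n : ℕ) :
    cellAt C x (n+1) = child C (cellAt C x n) (idx C (cellAt C x n) (wtn C x n)) :=
  (cellAt_kids C x n).choose_spec.2

lemma cellAt_congr (x x' : ℕ → ℕ) (n : ℕ) (h : ∀ m < n, x m = x' m) :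
    cellAt C x n = cellAt C x' n := by
  induction n with
  | zero => rfl
  | succ n ih =>
    show succCell C (cellAt C x n) (x n) = succCell C (cellAt C x' n) (x' n)
    rw [ih (fun m hm => h m (Nat.lt_succ_of_lt hm)), h n (Nat.lt_succ_self n)]

lemma cpos_cellAt_mono (x : ℕ → ℕ) {n m : ℕ} (h : n ≤ m) :
    cpos C (cellAt C x n) ⊆ cpos C (cellAt C x m) := by
  induction m with
  | zero => rw [Nat.le_zero.1 h]
  | succ m ih =>
    rcases Nat.lt_or_ge n (m+1) with hlt | hge
    · refine le_trans (ih (Nat.lt_succ_iff.1 hlt)) ?_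
      rw [cellAt_succ_eq C x m]
      exact cpos_mono_child C _ _
    · rw [Nat.le_antisymm h hge]

/-- the section along a branch -/
def branchSet (x : ℕ → ℕ) : Set Y := ⋃ n, cpos C (cellAt C x n)

lemma branchSet_open (x : ℕ → ℕ) : IsOpen (branchSet C x) :=
  isOpen_iUnion (fun n => cpos_open C _)

/-! ### chain limits -/

section Chains

variable (x : ℕ → ℕ)

/-- chain code at time m, position p -/
def codeAt (m p : ℕ) : ℕ := ((cellAt C x m).chains).getD p 0

lemma chains_len_mono (n : ℕ) :
    ((cellAt C x n).chains).length ≤ ((cellAt C x (n+1)).chains).length := by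
  rw [cellAt_succ_eq C x n, child_chains_idx]
  rw [List.length_append, List.length_append, List.length_map]
  omega

lemma chains_len_mono' {n m : ℕ} (h : n ≤ m) :
    ((cellAt C x n).chains).length ≤ ((cellAt C x m).chains).length := by
  induction m with
  | zero => rw [Nat.le_zero.1 h]
  | succ m ih =>
    rcases Nat.lt_or_ge n (m+1) with hlt | hge
    · exact le_trans (ih (Nat.lt_succ_iff.1 hlt)) (chains_len_mono C x m)
    · rw [Nat.le_antisymm h hge]

lemma codeAt_mem {m p : ℕ} (hp : p < ((cellAt C x m).chains).length) :
    codeAt C x m p ∈ (cellAt C x m).chains := by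
  rw [codeAt, List.getD_eq_getElem _ _ hp]
  exact List.getElem_mem _

lemma codeAt_step {m p : ℕ} (hp : p < ((cellAt C x m).chains).length) :
    refinesC C (codeAt C x (m+1) p) (codeAt C x m p) (m+1) ∧
      (bb C (codeAt C x (m+1) p) \ (wtn C x m)).Nonempty := by
  have hne : (bb C (codeAt C x m p) \ wtn C x m).Nonempty :=
    (wtn_mem C x m).2.2 _ (codeAt_mem C x hp)
  have hstep : codeAt C x (m+1) p = refFn C (m+1) (wtn C x m) (codeAt C x m p) := by
    rw [codeAt, codeAt, cellAt_succ_eq C x m, child_chains_idx]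
    rw [List.getD_eq_getElem _ _ (by
      rw [List.length_append, List.length_append, List.length_map]
      omega)]
    rw [List.getElem_append_left (by rw [List.length_append, List.length_map]; omega)]
    rw [List.getElem_append_left (by rw [List.length_map]; exact hp)]
    rw [List.getElem_map, List.getD_eq_getElem _ _ hp, cellAt_level]
  rw [hstep, refFn, dif_pos hne]
  exact Nat.find_spec (refChoice_ex C hne (m+1))

lemma codeAt_rad {m p : ℕ} (hp : p < ((cellAt C x m).chains).length) :
    rad C (codeAt C x m p).unpair.2 ≤ rad C m := by
  have := (cellAt_good C x m).chains_rad _ (codeAt_mem C x hp)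
  rwa [cellAt_level] at this

end Chains


section Limits

variable [CompleteSpace Y] (x : ℕ → ℕ)

lemma codeAt_lt_len {n m p : ℕ} (h : n ≤ m) (hp : p < ((cellAt C x n).chains).length) :
    p < ((cellAt C x m).chains).length :=
  lt_of_lt_of_le hp (chains_len_mono' C x h)

/-- center of the chain ball -/
def ctr (m p : ℕ) : Y := C.q ((codeAt C x m p).unpair.1)

/-- radius of the chain ball -/
def rr (m p : ℕ) : ℝ := rad C ((codeAt C x m p).unpair.2)

lemma dist_ctr_succ {n m p : ℕ} (h : n ≤ m) (hp : p < ((cellAt C x n).chains).length) :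
    dist (ctr C x (m+1) p) (ctr C x m p) + 2 * rr C x (m+1) p < rr C x m p :=
  ((codeAt_step C x (codeAt_lt_len C x h hp)).1).1

lemma rr_pos (m p : ℕ) : 0 < rr C x m p := rad_pos C _

lemma rr_le_rad {n m p : ℕ} (h : n ≤ m) (hp : p < ((cellAt C x n).chains).length) :
    rr C x m p ≤ rad C m :=
  codeAt_rad C x (codeAt_lt_len C x h hp)

lemma dist_ctr {n p : ℕ} (hp : p < ((cellAt C x n).chains).length) :
    ∀ {k m : ℕ}, n ≤ k → k < m → dist (ctr C x m p) (ctr C x k p) ≤ rr C x k p - 2 * rr C x m p := by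
  intro k m hnk hkm
  induction m with
  | zero => omega
  | succ m ih =>
    rcases Nat.lt_or_ge k m with hkm' | hge
    · have h1 := ih hkm'
      have h2 := dist_ctr_succ C x (le_trans hnk (le_of_lt hkm')) hp
      have h3 := dist_triangle (ctr C x (m+1) p) (ctr C x m p) (ctr C x k p)
      have h4 := rr_pos C x (m+1) p
      have h5 := rr_pos C x m p
      linarith
    · have : k = m := by omega
      subst this
      have h2 := dist_ctr_succ C x hnk hp
      linarith

lemma ctr_cauchy {n p : ℕ} (hp : p < ((cellAt C x n).chains).length) :
    CauchySeq (fun j => ctr C x (n + j) p) := by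
  rw [Metric.cauchySeq_iff']
  intro ε hε
  obtain ⟨i, hi⟩ := exists_rad_le C (half_pos hε)
  refine ⟨i, fun j hj => ?_⟩
  rcases Nat.lt_or_ge i j with hij | hge
  · have h1 := dist_ctr C x hp (k := n + i) (m := n + j) (Nat.le_add_right n i) (by omega)
    have h2 := rr_le_rad C x (Nat.le_add_right n i) hp
    have h3 : rad C (n + i) ≤ rad C i := rad_antitone C (Nat.le_add_left i n)
    have h4 := rr_pos C x (n + j) p
    calc dist (ctr C x (n+j) p) (ctr C x (n+i) p) ≤ rr C x (n+i) p - 2 * rr C x (n+j) p := h1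
      _ < ε := by linarith
  · have : j = i := by omega
    subst this
    simp only [dist_self]
    exact hε

/-- the limit point of a chain -/
def limPt (n p : ℕ) : Y :=
  if h : p < ((cellAt C x n).chains).length then
    (cauchySeq_tendsto_of_complete (ctr_cauchy C x h)).choose
  else C.q 0

lemma limPt_tendsto {n p : ℕ} (hp : p < ((cellAt C x n).chains).length) :
    Filter.Tendsto (fun j => ctr C x (n + j) p) Filter.atTop (nhds (limPt C x n p)) := by
  rw [limPt, dif_pos hp]
  exact (cauchySeq_tendsto_of_complete (ctr_cauchy C x hp)).choose_spec

lemma dist_limPt {n m p : ℕ} (hnm : n ≤ m) (hp : p < ((cellAt C x n).chains).length) :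
    dist (limPt C x n p) (ctr C x m p) ≤ rr C x m p := by
  have htend : Filter.Tendsto (fun j => dist (ctr C x (n + j) p) (ctr C x m p))
      Filter.atTop (nhds (dist (limPt C x n p) (ctr C x m p))) :=
    (limPt_tendsto C x hp).dist tendsto_const_nhds
  refine le_of_tendsto htend ?_
  filter_upwards [Filter.eventually_ge_atTop (m + 1 - n)] with j hj
  have h1 := dist_ctr C x hp (k := m) (m := n + j) hnm (by omega)
  have h2 := rr_pos C x (n + j) p
  linarith

lemma limPt_mem_bb {n m p : ℕ} (hnm : n ≤ m) (hp : p < ((cellAt C x n).chains).length) :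
    limPt C x n p ∈ bb C (codeAt C x m p) := by
  have h1 := dist_limPt C x (le_trans hnm (Nat.le_succ m)) hp
  have h2 := dist_ctr_succ C x hnm hp
  have h3 := dist_triangle (limPt C x n p) (ctr C x (m+1) p) (ctr C x m p)
  have h4 := rr_pos C x (m+1) p
  simp only [bb, mem_ball]
  show dist (limPt C x n p) (ctr C x m p) < rr C x m p
  linarith

lemma limPt_not_mem_cpos {n p : ℕ} (hp : p < ((cellAt C x n).chains).length) (j : ℕ) :
    limPt C x n p ∉ cpos C (cellAt C x j) := by
  intro hmem
  obtain ⟨η, hη, hball⟩ := Metric.isOpen_iff.1 (cpos_open C _) _ hmem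
  obtain ⟨i, hi⟩ := exists_rad_le C (by linarith : (0:ℝ) < η / 4)
  set m := max i (max j n) with hm
  have hin : n ≤ m := le_trans (le_max_right j n) (le_max_right i _)
  have hij : j ≤ m := le_trans (le_max_left j n) (le_max_right i _)
  have him : i ≤ m := le_max_left i _
  obtain ⟨w, hw, hwW⟩ := (codeAt_step C x (codeAt_lt_len C x hin hp)).2
  -- w is close to the limit point
  have hd1 : dist w (ctr C x (m+1) p) < rr C x (m+1) p := by
    simpa [bb, ctr, rr, mem_ball] using hw
  have hd2 := dist_limPt C x (le_trans hin (Nat.le_succ m)) hp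
  have hrad : rr C x (m+1) p ≤ rad C (m+1) := rr_le_rad C x (le_trans hin (Nat.le_succ m)) hp
  have hrad2 : rad C (m+1) ≤ rad C i := rad_antitone C (by omega)
  have hwlim : dist w (limPt C x n p) < η := by
    have := dist_triangle w (ctr C x (m+1) p) (limPt C x n p)
    rw [dist_comm (ctr C x (m+1) p) (limPt C x n p)] at this
    linarith
  have hwball : w ∈ ball (limPt C x n p) η := by
    rw [mem_ball]
    exact hwlim
  have hwcpos : w ∈ cpos C (cellAt C x j) := hball hwball
  have : w ∈ wtn C x m := (wtn_mem C x m).2.1 (cpos_cellAt_mono C x hij hwcpos)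
  exact hwW this

/-- The branch section belongs to every cell along the branch. -/
lemma branchSet_mem (n : ℕ) : branchSet C x ∈ cmem C (cellAt C x n) := by
  refine ⟨branchSet_open C x, Set.subset_iUnion (fun k => cpos C (cellAt C x k)) n, ?_⟩
  intro c hc
  obtain ⟨p, hp, hcp⟩ := List.mem_iff_getElem.1 hc
  have hcode : codeAt C x n p = c := by
    rw [codeAt, List.getD_eq_getElem _ _ hp, hcp]
  refine ⟨limPt C x n p, ?_, ?_⟩
  · rw [← hcode]
    exact limPt_mem_bb C x le_rfl hp
  · intro hmem
    simp only [branchSet, mem_iUnion] at hmem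
    obtain ⟨j, hj⟩ := hmem
    exact limPt_not_mem_cpos C x hp j hj

end Limits


/-! ### readability: canonical index reconstruction -/

lemma bb_subset_of_mem_small {A : Cell Y} {m : ℕ} (hm : m ∈ A.small) : bb C m ⊆ cpos C A :=
  le_trans (Set.subset_biUnion_of_mem hm) le_sup_left

lemma Zb_subset_of_mem_zpos {A : Cell Y} {k : ℕ} (hk : k ∈ A.zpos) : Zb C k ⊆ cpos C A :=
  le_trans (Set.subset_biUnion_of_mem hk) le_sup_right

lemma idx_eq {A : Cell Y} (hA : Good C A) {W' W : Set Y} (hW' : W' ∈ cmem C A)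
    (hpos : cpos C (child C A (idx C A W')) ⊆ W)
    (hWch : ∀ c ∈ (child C A (idx C A W')).chains, (bb C c \ W).Nonempty) :
    idx C A W = idx C A W' := by
  have hsmall : ∀ m ∈ (child C A (idx C A W')).small, bb C m ⊆ W :=
    fun m hm => le_trans (bb_subset_of_mem_small C hm) hpos
  have hzps : ∀ k ∈ (child C A (idx C A W')).zpos, Zb C k ⊆ W :=
    fun k hk => le_trans (Zb_subset_of_mem_zpos C hk) hpos
  -- the bit and init components
  have hbit : (if bb C A.level ⊆ W then true else false)
        = (if bb C A.level ⊆ W' then true else false) ∧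
      (if h : ¬ bb C A.level ⊆ W then Nat.find (initChoice_ex C h (A.level+1)) else 0)
        = (if h : ¬ bb C A.level ⊆ W' then Nat.find (initChoice_ex C h (A.level+1)) else 0) := by
    by_cases hb' : bb C A.level ⊆ W'
    · have hbW : bb C A.level ⊆ W := by
        apply hsmall
        simp only [child, idx, if_pos hb', Set.mem_union]
        left; left; right
        exact rfl
      rw [if_pos hbW, if_pos hb', dif_neg (not_not_intro hbW), dif_neg (not_not_intro hb')]
      exact ⟨rfl, rfl⟩
    · set m₀' := Nat.find (initChoice_ex C hb' (A.level+1)) with hm₀'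
      have hspec' := Nat.find_spec (initChoice_ex C hb' (A.level+1))
      have hmem : m₀' ∈ (child C A (idx C A W')).chains := by
        rw [child_chains_idx, if_neg hb']
        simp only [List.mem_append, List.mem_singleton]
        left; right
        rw [dif_pos hb']
      obtain ⟨y, hy, hyW⟩ := hWch _ hmem
      have hbW : ¬ bb C A.level ⊆ W := fun hsub => hyW (hsub (refinesC_subset C hspec'.1 hy))
      constructor
      · rw [if_neg hbW, if_neg hb']
      · rw [dif_pos hbW, dif_pos hb']
        refine le_antisymm (Nat.find_min' _ ⟨hspec'.1, ⟨y, hy, hyW⟩⟩) ?_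
        by_contra hlt
        push_neg at hlt
        have hfspec := Nat.find_spec (initChoice_ex C hbW (A.level+1))
        have hsk : Nat.find (initChoice_ex C hbW (A.level+1)) ∈ (child C A (idx C A W')).small := by
          simp only [child, idx, if_neg hb', Set.mem_union]
          left; left; right
          refine ⟨?_, hfspec.1⟩
          rw [dif_pos hb']
          exact hlt
        obtain ⟨y₂, hy₂, hy₂W⟩ := hfspec.2
        exact hy₂W (hsmall _ hsk hy₂)
  -- the tau component
  have htau : (if h : ∃ t, ¬ Zb C (desig C A t) ⊆ W then
        some (Nat.find h, Nat.find (zChoice_ex C (Nat.find_spec h) (A.level+1))) else none)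
      = (if h : ∃ t, ¬ Zb C (desig C A t) ⊆ W' then
        some (Nat.find h, Nat.find (zChoice_ex C (Nat.find_spec h) (A.level+1))) else none) := by
    by_cases hz' : ∃ t, ¬ Zb C (desig C A t) ⊆ W'
    · set t' := Nat.find hz' with ht'
      set mz' := Nat.find (zChoice_ex C (Nat.find_spec hz') (A.level+1)) with hmz'
      have hspec' := Nat.find_spec (zChoice_ex C (Nat.find_spec hz') (A.level+1))
      have hmem : mz' ∈ (child C A (idx C A W')).chains := by
        rw [child_chains_idx, dif_pos hz']
        simp [mz']
      obtain ⟨y, hy, hyW⟩ := hWch _ hmem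
      have hzW : ∃ t, ¬ Zb C (desig C A t) ⊆ W :=
        ⟨t', fun hsub => hyW (hsub (refinesZ_subset C hspec'.1 hy))⟩
      rw [dif_pos hzW, dif_pos hz']
      have hfind : Nat.find hzW = t' := by
        refine le_antisymm (Nat.find_min' _ (fun hsub => hyW (hsub (refinesZ_subset C hspec'.1 hy)))) ?_
        by_contra hlt
        push_neg at hlt
        apply Nat.find_spec hzW
        apply hzps
        simp only [child, idx, dif_pos hz', Set.mem_union]
        right
        exact ⟨Nat.find hzW, hlt, rfl⟩
      -- now the z-chain init component
      have hmzeq : Nat.find (zChoice_ex C (Nat.find_spec hzW) (A.level+1)) = mz' := by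
        refine le_antisymm ?_ ?_
        · apply Nat.find_min'
          constructor
          · show refinesZ C mz' (desig C A (Nat.find hzW)) (A.level+1)
            rw [hfind]
            exact hspec'.1
          · exact ⟨y, hy, hyW⟩
        · by_contra hlt
          push_neg at hlt
          have hfspec := Nat.find_spec (zChoice_ex C (Nat.find_spec hzW) (A.level+1))
          have hsk : Nat.find (zChoice_ex C (Nat.find_spec hzW) (A.level+1))
              ∈ (child C A (idx C A W')).small := by
            simp only [child, idx, dif_pos hz', Set.mem_union]
            left; right
            refine ⟨hlt, ?_⟩
            show refinesZ C _ (desig C A t') (A.level+1)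
            rw [← hfind]
            exact hfspec.1
          obtain ⟨y₂, hy₂, hy₂W⟩ := hfspec.2
          exact hy₂W (hsmall _ hsk hy₂)
      rw [hmzeq, hfind]
    · have hzW : ¬ ∃ t, ¬ Zb C (desig C A t) ⊆ W := by
        push_neg
        intro t
        apply hzps
        simp only [child, idx, dif_neg hz', Set.mem_union]
        right
        exact ⟨t, rfl⟩
      rw [dif_neg hzW, dif_neg hz']
  -- the refinement components
  have href : A.chains.map (refFn C (A.level+1) W) = A.chains.map (refFn C (A.level+1) W') := by
    apply List.map_congr_left
    intro c hc
    have hne' : (bb C c \ W').Nonempty := hW'.2.2 c hc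
    have hspec' := Nat.find_spec (refChoice_ex C hne' (A.level+1))
    have hmem : refFn C (A.level+1) W' c ∈ (child C A (idx C A W')).chains := by
      rw [child_chains_idx]
      simp only [List.mem_append]
      left; left
      exact List.mem_map_of_mem hc
    obtain ⟨y, hy, hyW⟩ := hWch _ hmem
    simp only [refFn, dif_pos hne'] at hy hyW
    have hneW : (bb C c \ W).Nonempty :=
      ⟨y, refinesC_subset C hspec'.1 hy, hyW⟩
    simp only [refFn, dif_pos hneW, dif_pos hne']
    refine le_antisymm (Nat.find_min' _ ⟨hspec'.1, ⟨y, hy, hyW⟩⟩) ?_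
    by_contra hlt
    push_neg at hlt
    have hfspec := Nat.find_spec (refChoice_ex C hneW (A.level+1))
    have hsk : Nat.find (refChoice_ex C hneW (A.level+1)) ∈ (child C A (idx C A W')).small := by
      simp only [child, idx, Set.mem_union]
      right
      refine ⟨(c, refFn C (A.level+1) W' c), ?_, ?_, hfspec.1⟩
      · rw [show A.chains.zip (A.chains.map (refFn C (A.level+1) W')) =
            A.chains.map (fun c => (c, refFn C (A.level+1) W' c)) from by
              simpa using List.zip_map' (f := id) (g := refFn C (A.level+1) W') (l := A.chains)]
        exact List.mem_map_of_mem hc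
      · simp only [refFn, dif_pos hne']
        exact hlt
    obtain ⟨y₂, hy₂, hy₂W⟩ := hfspec.2
    exact hy₂W (hsmall _ hsk hy₂)
  show (_, _, _, _) = (_, _, _, _)
  rw [Prod.ext_iff, Prod.ext_iff, Prod.ext_iff]
  exact ⟨hbit.1, hbit.2, htau, href⟩


/-! ### the canonical branch of an open set -/

section Canonical

variable (W : Set Y)

/-- canonical cells of an open set `W` -/
def chainCell : ℕ → Cell Y
  | 0 => root
  | n+1 => child C (chainCell n) (idx C (chainCell n) W)

lemma chainCell_spec (hW : IsOpen W) :
    ∀ n, (Good C (chainCell C W n) ∧ W ∈ cmem C (chainCell C W n)) ∧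
      (chainCell C W n).level = n := by
  intro n
  induction n with
  | zero =>
    refine ⟨⟨good_root C, hW, ?_, ?_⟩, rfl⟩
    · show cpos C root ⊆ W
      rw [cpos_root]
      exact Set.empty_subset W
    · intro c hc
      simp [show (chainCell C W 0).chains = [] from rfl] at hc
  | succ n ih =>
    obtain ⟨⟨hg, hm⟩, hlev⟩ := ih
    refine ⟨⟨good_child C hg hm, mem_child_idx C hg hm⟩, ?_⟩
    show (chainCell C W n).level + 1 = n + 1
    rw [hlev]

lemma chainCell_kids (hW : IsOpen W) (n : ℕ) :
    chainCell C W (n+1) ∈ kids C (chainCell C W n) :=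
  ⟨W, ((chainCell_spec C W hW n).1).2, rfl⟩

/-- the canonical branch -/
def xcan (hW : IsOpen W) (n : ℕ) : ℕ :=
  (succCell_surjective C ⟨((chainCell_spec C W hW n).1).1, ⟨W, ((chainCell_spec C W hW n).1).2⟩⟩
    (chainCell_kids C W hW n)).choose

lemma xcan_spec (hW : IsOpen W) (n : ℕ) :
    succCell C (chainCell C W n) (xcan C W hW n) = chainCell C W (n+1) :=
  (succCell_surjective C ⟨((chainCell_spec C W hW n).1).1, ⟨W, ((chainCell_spec C W hW n).1).2⟩⟩
    (chainCell_kids C W hW n)).choose_spec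

lemma cellAt_xcan (hW : IsOpen W) (n : ℕ) :
    cellAt C (xcan C W hW) n = chainCell C W n := by
  induction n with
  | zero => rfl
  | succ n ih =>
    show succCell C (cellAt C (xcan C W hW) n) (xcan C W hW n) = _
    rw [ih, xcan_spec]

/-- existence: the canonical branch has section W -/
lemma branchSet_xcan (hW : IsOpen W) : branchSet C (xcan C W hW) = W := by
  apply Set.Subset.antisymm
  · apply Set.iUnion_subset
    intro n
    rw [cellAt_xcan C W hW n]
    exact (((chainCell_spec C W hW n).1).2).2.1
  · intro y hy
    obtain ⟨m, hym, hmW⟩ := exists_bb_subset C hW hy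
    have hlev : (chainCell C W m).level = m := (chainCell_spec C W hW m).2
    have hbit : bb C (chainCell C W m).level ⊆ W := by rw [hlev]; exact hmW
    have hmem : (chainCell C W m).level ∈ (chainCell C W (m+1)).small := by
      show _ ∈ (child C (chainCell C W m) (idx C (chainCell C W m) W)).small
      simp only [child, idx, if_pos hbit, Set.mem_union]
      left; left; right
      exact rfl
    have : bb C (chainCell C W m).level ⊆ cpos C (chainCell C W (m+1)) :=
      bb_subset_of_mem_small C hmem
    rw [hlev] at this
    refine Set.mem_iUnion.2 ⟨m+1, ?_⟩
    rw [cellAt_xcan C W hW (m+1)]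
    exact this hym

/-- uniqueness: any branch with section W is the canonical branch -/
lemma branch_unique [CompleteSpace Y] (x : ℕ → ℕ) (hW : IsOpen W)
    (hx : branchSet C x = W) : x = xcan C W hW := by
  have key : ∀ n, (∀ m < n, x m = xcan C W hW m) → x n = xcan C W hW n := by
    intro n ih
    have hcell : cellAt C x n = chainCell C W n := by
      rw [cellAt_congr C x (xcan C W hW) n ih, cellAt_xcan]
    have hgood : Good C (cellAt C x n) := cellAt_good C x n
    have hW' : wtn C x n ∈ cmem C (cellAt C x n) := wtn_mem C x n
    have hpos : cpos C (child C (cellAt C x n) (idx C (cellAt C x n) (wtn C x n))) ⊆ W := by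
      rw [← cellAt_succ_eq C x n, ← hx]
      exact Set.subset_iUnion (fun k => cpos C (cellAt C x k)) (n+1)
    have hWch : ∀ c ∈ (child C (cellAt C x n) (idx C (cellAt C x n) (wtn C x n))).chains,
        (bb C c \ W).Nonempty := by
      rw [← cellAt_succ_eq C x n, ← hx]
      exact (branchSet_mem C x (n+1)).2.2
    have heq := idx_eq C hgood hW' hpos hWch
    -- both successors agree
    have h1 : succCell C (cellAt C x n) (x n) = succCell C (cellAt C x n) (xcan C W hW n) := by
      have e1 : succCell C (cellAt C x n) (x n) = cellAt C x (n+1) := rfl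
      have e2 : succCell C (cellAt C x n) (xcan C W hW n)
          = succCell C (cellAt C (xcan C W hW) n) (xcan C W hW n) := by
        rw [cellAt_congr C x (xcan C W hW) n ih]
      have e3 : succCell C (cellAt C (xcan C W hW) n) (xcan C W hW n)
          = chainCell C W (n+1) := by
        rw [cellAt_xcan C W hW n, xcan_spec]
      have e4 : cellAt C x (n+1) = chainCell C W (n+1) := by
        rw [cellAt_succ_eq C x n, ← heq, hcell]
        rfl
      rw [e1, e2, e3, e4]
    exact succCell_injective C ⟨cellAt_good C x n, cellAt_nonempty C x n⟩ h1
  funext n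
  induction n using Nat.strong_induction_on with
  | _ n ih => exact key n ih

end Canonical


/-! ### the universal set -/

def Uset : Set ((ℕ → ℕ) × Y) := {p | ∃ n, p.2 ∈ cpos C (cellAt C p.1 n)}

lemma Uset_section (x : ℕ → ℕ) : {y | (x, y) ∈ Uset C} = branchSet C x := by
  ext y
  simp only [Uset, branchSet, mem_setOf_eq, mem_iUnion]

lemma Uset_open : IsOpen (Uset C) := by
  rw [isOpen_iff_mem_nhds]
  rintro ⟨x, y⟩ ⟨n, hn⟩
  have hcyl : IsOpen {x' : ℕ → ℕ | ∀ m < n, x' m = x m} := by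
    have he : {x' : ℕ → ℕ | ∀ m < n, x' m = x m}
        = ⋂ m ∈ Finset.range n, (fun x' : ℕ → ℕ => x' m) ⁻¹' {x m} := by
      ext x'
      simp [Finset.mem_range]
    rw [he]
    exact isOpen_biInter_finset
      (fun m _ => (continuous_apply m).isOpen_preimage _ (isOpen_discrete _))
  have hsub : {x' : ℕ → ℕ | ∀ m < n, x' m = x m} ×ˢ cpos C (cellAt C x n) ⊆ Uset C := by
    rintro ⟨x', y'⟩ ⟨hx', hy'⟩
    exact ⟨n, by rw [cellAt_congr C x' x n hx']; exact hy'⟩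
  exact Filter.mem_of_superset
    (IsOpen.mem_nhds (hcyl.prod (cpos_open C _)) ⟨fun m _ => rfl, hn⟩) hsub

theorem UU_of_ctx [CompleteSpace Y] (C : Ctx Y) : UU (ℕ → ℕ) Y := by
  refine ⟨Uset C, Uset_open C, fun W hW => ?_⟩
  refine ⟨xcan C W hW, ?_, ?_⟩
  · show {y | (xcan C W hW, y) ∈ Uset C} = W
    rw [Uset_section, branchSet_xcan]
  · intro x hx
    rw [Uset_section] at hx
    exact branch_unique C W x hW hx

end UUP



theorem stmt_9 (Y : Type*) [TopologicalSpace Y] [PolishSpace Y]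
    (h : ¬ CompactSpace Y) : UU (ℕ → ℕ) Y := by
  classical
  have hne : Nonempty Y := by
    by_contra hempty
    rw [not_nonempty_iff] at hempty
    exact h ⟨by rw [Set.univ_eq_empty_iff.2 hempty]; exact isCompact_empty⟩
  letI := TopologicalSpace.upgradeIsCompletelyMetrizable Y
  obtain ⟨q, hq⟩ := TopologicalSpace.exists_dense_seq Y
  have htb : ¬ TotallyBounded (Set.univ : Set Y) := by
    intro htb
    exact h ⟨isCompact_iff_totallyBounded_isComplete.2
      ⟨htb, completeSpace_iff_isComplete_univ.1 inferInstance⟩⟩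
  rw [Metric.totallyBounded_iff] at htb
  push_neg at htb
  obtain ⟨ε, hε, hcov⟩ := htb
  have pick : ∀ l : List Y, ∃ p : Y, ∀ w ∈ l, ε ≤ dist p w := by
    intro l
    have hc := hcov {y | y ∈ l} l.finite_toSet
    obtain ⟨p, -, hp⟩ := Set.not_subset.1 hc
    refine ⟨p, fun w hw => ?_⟩
    by_contra hlt
    push_neg at hlt
    exact hp (Set.mem_biUnion hw (Metric.mem_ball.2 hlt))
  choose pickF pickSpec using pick
  let zl : ℕ → List Y := fun n => Nat.rec [] (fun _ l => pickF l :: l) n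
  let z : ℕ → Y := fun n => pickF (zl n)
  have hzl : ∀ m n, m < n → z m ∈ zl n := by
    intro m n
    induction n with
    | zero => omega
    | succ n ih =>
      intro hmn
      show z m ∈ pickF (zl n) :: zl n
      rcases Nat.lt_or_ge m n with hlt | hge
      · exact List.mem_cons_of_mem _ (ih hlt)
      · have : m = n := by omega
        subst this
        exact List.mem_cons_self
  have hzsep : ∀ k l, k ≠ l → ε ≤ dist (z k) (z l) := by
    intro k l hkl
    rcases Nat.lt_or_ge k l with hlt | hge
    · rw [dist_comm]
      exact pickSpec (zl l) _ (hzl k l hlt)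
    · have : l < k := by omega
      exact pickSpec (zl k) _ (hzl l k this)
  exact UUP.UU_of_ctx ⟨q, hq, ε, hε, z, hzsep⟩
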